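/- Let G = (V, E) be bipartite with interdiction costs c : V → ℤ_{>0} and budget B. Order V = {v₁,…,vₙ} with c(v₁) ≤ … ≤ c(vₙ), and set V_ℓ = {v₁,…,v_ℓ}. If R is an optimal interdiction set (minimizing α(G[V \ R]) subject to c(R) ≤ B) and M* is a maximum matching in G[V \ R], then R* = V_ℓ \ V(M*), where ℓ is the largest index with c(V_ℓ \ V(M*)) ≤ B, is also an optimal interdiction set. -/

import Mathlib

open Finset

/-- `M` is a matching of `G` avoiding the vertex set `R`. -/
def IsMatchingAvoiding {V : Type*} (G : SimpleGraph V) (R : Finset V)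
    (M : Finset (V × V)) : Prop :=
  (∀ p ∈ M, G.Adj p.1 p.2 ∧ p.1 ∉ R ∧ p.2 ∉ R) ∧
    ∀ p ∈ M, ∀ q ∈ M, p ≠ q →
      p.1 ≠ q.1 ∧ p.1 ≠ q.2 ∧ p.2 ≠ q.1 ∧ p.2 ≠ q.2

/-- `S` is a stable set of `G` avoiding the vertex set `R`. -/
def IsStableAvoiding {V : Type*} (G : SimpleGraph V) (R : Finset V)
    (S : Finset V) : Prop :=
  (∀ v ∈ S, v ∉ R) ∧ ∀ u ∈ S, ∀ v ∈ S, ¬G.Adj u v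

/-- The set of endpoints of the edges of `M`. -/
def matchEnds {V : Type*} [DecidableEq V] (M : Finset (V × V)) : Finset V :=
  M.image Prod.fst ∪ M.image Prod.snd

/-- The `ℓ` cheapest vertices (vertices are ordered by nondecreasing cost). -/
def cheapest (n ℓ : ℕ) : Finset (Fin n) :=
  Finset.univ.filter (fun v => (v : ℕ) < ℓ)

lemma stable_matching_bound {n : ℕ} (G : SimpleGraph (Fin n)) (R₀ : Finset (Fin n))
    (M : Finset (Fin n × Fin n)) (hM : IsMatchingAvoiding G R₀ M)
    (S : Finset (Fin n)) (hS : IsStableAvoiding G R₀ S) :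
    S.card + M.card + R₀.card ≤ n := by
  classical
  set T : Finset (Fin n) := M.image (fun p => if p.1 ∈ S then p.2 else p.1) with hT
  have hTcard : T.card = M.card := by
    rw [hT, Finset.card_image_of_injOn]
    intro p hp q hq hpq
    by_contra hne
    obtain ⟨h1, h2, h3, h4⟩ := hM.2 p hp q hq hne
    dsimp at hpq
    split_ifs at hpq <;> simp_all
  have hTS : ∀ x ∈ T, x ∉ S := by
    intro x hx
    rw [hT, Finset.mem_image] at hx
    obtain ⟨p, hp, rfl⟩ := hx
    split_ifs with h
    · exact fun h2 => hS.2 _ h _ h2 (hM.1 p hp).1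
    · exact h
  have hTR : ∀ x ∈ T, x ∉ R₀ := by
    intro x hx
    rw [hT, Finset.mem_image] at hx
    obtain ⟨p, hp, rfl⟩ := hx
    split_ifs
    · exact (hM.1 p hp).2.2
    · exact (hM.1 p hp).2.1
  have hd1 : Disjoint S T := by
    rw [Finset.disjoint_right]; exact hTS
  have hd2 : Disjoint (S ∪ T) R₀ := by
    rw [Finset.disjoint_left]
    intro x hx
    rcases Finset.mem_union.1 hx with h | h
    · exact hS.1 x h
    · exact hTR x h
  calc S.card + M.card + R₀.card = (S ∪ T ∪ R₀).card := by
        rw [Finset.card_union_of_disjoint hd2, Finset.card_union_of_disjoint hd1, hTcard]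
    _ ≤ (Finset.univ : Finset (Fin n)).card := Finset.card_le_univ _
    _ = n := by simp

lemma konig_bound {n : ℕ} (G : SimpleGraph (Fin n)) (col : Fin n → Bool)
    (hbip : ∀ u v, G.Adj u v → col u ≠ col v) (R : Finset (Fin n))
    (M : Finset (Fin n × Fin n)) (hM : IsMatchingAvoiding G R M)
    (hMmax : ∀ M', IsMatchingAvoiding G R M' → M'.card ≤ M.card) :
    ∃ S, IsStableAvoiding G R S ∧ n ≤ S.card + M.card + R.card := by
  classical
  set A : Finset (Fin n) := univ.filter (fun v => col v = true ∧ v ∉ R) with hA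
  set Bs : Finset (Fin n) := univ.filter (fun v => col v = false ∧ v ∉ R) with hBs
  set N : Finset (Fin n) → Finset (Fin n) :=
    fun X => Bs.filter (fun b => ∃ a ∈ X, G.Adj a b) with hNdef
  -- the partition
  have hdisj1 : Disjoint A Bs := by
    rw [Finset.disjoint_left]; intro v hv hv'
    simp only [hA, hBs, Finset.mem_filter] at hv hv'
    simp [hv.2.1] at hv'
  have hdisjR : Disjoint (A ∪ Bs) R := by
    rw [Finset.disjoint_left]; intro v hv hvR
    rcases Finset.mem_union.1 hv with h | h <;>
      simp only [hA, hBs, Finset.mem_filter] at h <;> exact h.2.2 hvR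
  have hcover : A ∪ Bs ∪ R = univ := by
    ext v
    simp only [Finset.mem_union, Finset.mem_univ, iff_true, hA, hBs, Finset.mem_filter,
      Finset.mem_univ, true_and]
    by_cases hvR : v ∈ R
    · tauto
    · cases hcv : col v
      · tauto
      · tauto
  have hpart : A.card + Bs.card + R.card = n := by
    rw [← Finset.card_union_of_disjoint hdisj1, ← Finset.card_union_of_disjoint hdisjR,
      hcover, Finset.card_univ, Fintype.card_fin]
  -- the maximum defect
  set d : ℕ := (A.powerset.image (fun X => X.card - (N X).card)).max'
    (Finset.Nonempty.image ⟨∅, Finset.empty_mem_powerset A⟩ _) with hd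
  have hd1 : ∀ X ⊆ A, X.card ≤ (N X).card + d := by
    intro X hX
    have h2 : X.card - (N X).card ≤ d := by
      simpa using Finset.le_max' _ _ (Finset.mem_image_of_mem (fun X => X.card - (N X).card)
        (Finset.mem_powerset.2 hX))
    omega
  obtain ⟨X, hXA, hXcard⟩ : ∃ X ⊆ A, X.card = (N X).card + d := by
    have hmem := Finset.max'_mem (A.powerset.image (fun X => X.card - (N X).card))
      (Finset.Nonempty.image ⟨∅, Finset.empty_mem_powerset A⟩ _)
    rw [← hd, Finset.mem_image] at hmem
    obtain ⟨X₀, hX₀, hX₀d⟩ := hmem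
    by_cases hc : (N X₀).card ≤ X₀.card
    · exact ⟨X₀, Finset.mem_powerset.1 hX₀, by omega⟩
    · have hd0 : d = 0 := by omega
      refine ⟨∅, Finset.empty_subset A, ?_⟩
      have : N ∅ = ∅ := by simp [hNdef]
      rw [this, hd0]; simp
  -- Hall's theorem gives a large matching
  have hAd : A.card ≤ M.card + d := by
    set t : {a : Fin n // a ∈ A} → Finset (Fin n ⊕ Fin d) := fun a =>
      ((Bs.filter (fun b => G.Adj a.1 b)).image Sum.inl) ∪
        ((univ : Finset (Fin d)).image Sum.inr) with ht
    have hall : ∀ s : Finset {a : Fin n // a ∈ A}, s.card ≤ (s.biUnion t).card := by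
      intro s
      rcases s.eq_empty_or_nonempty with rfl | hs
      · simp
      set X' : Finset (Fin n) := s.image (fun a => a.1) with hX'
      have hX'A : X' ⊆ A := by
        intro x hx; rw [hX', Finset.mem_image] at hx
        obtain ⟨a, _, rfl⟩ := hx; exact a.2
      have hcard : X'.card = s.card :=
        Finset.card_image_of_injective _ Subtype.val_injective
      have hsub : (N X').image Sum.inl ∪ ((univ : Finset (Fin d)).image Sum.inr)
          ⊆ s.biUnion t := by
        intro x hx
        rcases Finset.mem_union.1 hx with hx | hx
        · rw [Finset.mem_image] at hx; obtain ⟨b, hb, rfl⟩ := hx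
          rw [hNdef, Finset.mem_filter] at hb
          have hbBs := hb.1
          obtain ⟨a, haX', hadj⟩ := hb.2
          rw [hX', Finset.mem_image] at haX'
          obtain ⟨a', ha's, rfl⟩ := haX'
          refine Finset.mem_biUnion.2 ⟨a', ha's, ?_⟩
          rw [ht]
          exact Finset.mem_union_left _ (Finset.mem_image_of_mem _
            (Finset.mem_filter.2 ⟨hbBs, hadj⟩))
        · obtain ⟨a, ha⟩ := hs
          exact Finset.mem_biUnion.2 ⟨a, ha, Finset.mem_union_right _ hx⟩
      have hdisj : Disjoint ((N X').image Sum.inl)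
          ((univ : Finset (Fin d)).image (Sum.inr : Fin d → Fin n ⊕ Fin d)) := by
        rw [Finset.disjoint_left]
        intro x hx hx'
        rw [Finset.mem_image] at hx hx'
        obtain ⟨b, _, rfl⟩ := hx
        obtain ⟨j, _, hj⟩ := hx'
        exact Sum.inl_ne_inr hj.symm
      have hcard2 : ((N X').image Sum.inl ∪
          ((univ : Finset (Fin d)).image Sum.inr)).card = (N X').card + d := by
        rw [Finset.card_union_of_disjoint hdisj,
          Finset.card_image_of_injective _ Sum.inl_injective,
          Finset.card_image_of_injective _ Sum.inr_injective]
        simp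
      calc s.card = X'.card := hcard.symm
        _ ≤ (N X').card + d := hd1 X' hX'A
        _ = _ := hcard2.symm
        _ ≤ (s.biUnion t).card := Finset.card_le_card hsub
    obtain ⟨f, hfinj, hft⟩ := (Finset.all_card_le_biUnion_card_iff_exists_injective t).mp hall
    set g : {a : Fin n // a ∈ A} → Fin n := fun a => (f a).elim id (fun _ => a.1) with hg
    have hkey : ∀ a : {a : Fin n // a ∈ A}, (f a).isLeft →
        G.Adj a.1 (g a) ∧ g a ∈ Bs ∧ f a = Sum.inl (g a) := by
      intro a hleft
      cases hfa : f a with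
      | inr j => rw [hfa] at hleft; simp at hleft
      | inl b =>
        have := hft a
        rw [hfa, ht] at this
        rcases Finset.mem_union.1 this with h | h
        · rw [Finset.mem_image] at h
          obtain ⟨b', hb', hbb⟩ := h
          have hbb' : b' = b := Sum.inl_injective hbb
          subst hbb'
          rw [Finset.mem_filter] at hb'
          have hgab : g a = b' := by rw [hg]; simp [hfa]
          exact ⟨hgab ▸ hb'.2, hgab ▸ hb'.1, by rw [hgab]⟩
        · rw [Finset.mem_image] at h
          obtain ⟨j, _, hj⟩ := h
          exact (Sum.inl_ne_inr hj.symm).elim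
    set s1 : Finset {a : Fin n // a ∈ A} := univ.filter (fun a => (f a).isLeft) with hs1
    set M' : Finset (Fin n × Fin n) := s1.image (fun a => (a.1, g a)) with hM'
    have hM'card : M'.card = s1.card := by
      rw [hM']
      apply Finset.card_image_of_injOn
      intro a _ b _ hab
      exact Subtype.val_injective (congrArg Prod.fst hab)
    have hcolA : ∀ a : {a : Fin n // a ∈ A}, col a.1 = true ∧ a.1 ∉ R := by
      intro a
      have h2 : a.1 ∈ univ.filter (fun v => col v = true ∧ v ∉ R) := by
        rw [← hA]; exact a.2
      exact (Finset.mem_filter.1 h2).2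
    have hcolBs : ∀ b ∈ Bs, col b = false ∧ b ∉ R := by
      intro b hb
      rw [hBs, Finset.mem_filter] at hb
      exact hb.2
    have hM'match : IsMatchingAvoiding G R M' := by
      constructor
      · intro p hp
        rw [hM', Finset.mem_image] at hp
        obtain ⟨a, ha, rfl⟩ := hp
        rw [hs1, Finset.mem_filter] at ha
        obtain ⟨hadj, hbBs, _⟩ := hkey a ha.2
        exact ⟨hadj, (hcolA a).2, (hcolBs _ hbBs).2⟩
      · intro p hp q hq hpq
        rw [hM', Finset.mem_image] at hp hq
        obtain ⟨a, ha, rfl⟩ := hp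
        obtain ⟨b, hb, rfl⟩ := hq
        rw [hs1, Finset.mem_filter] at ha hb
        have hab : a ≠ b := fun h => hpq (by rw [h])
        obtain ⟨_, haBs, hfa⟩ := hkey a ha.2
        obtain ⟨_, hbBs, hfb⟩ := hkey b hb.2
        refine ⟨fun h => hab (Subtype.val_injective h), ?_, ?_, ?_⟩
        · intro h
          have h' : (a : Fin n) = g b := h
          have hcb := (hcolBs _ hbBs).1
          rw [← h', (hcolA a).1] at hcb
          exact Bool.noConfusion hcb
        · intro h
          have h' : g a = (b : Fin n) := h
          have hca := (hcolBs _ haBs).1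
          rw [h', (hcolA b).1] at hca
          exact Bool.noConfusion hca
        · intro h
          have h' : g a = g b := h
          apply hab
          apply hfinj
          rw [hfa, hfb, h']
    have hs2 : (univ.filter (fun a : {a : Fin n // a ∈ A} => ¬(f a).isLeft)).card ≤ d := by
      have hsub2 : (univ.filter (fun a : {a : Fin n // a ∈ A} => ¬(f a).isLeft)).image f
          ⊆ (univ : Finset (Fin d)).image Sum.inr := by
        intro x hx
        rw [Finset.mem_image] at hx
        obtain ⟨a, ha, rfl⟩ := hx
        rw [Finset.mem_filter] at ha
        cases hfa : f a with
        | inl b => rw [hfa] at ha; simp at ha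
        | inr j => exact Finset.mem_image_of_mem _ (Finset.mem_univ j)
      calc (univ.filter (fun a : {a : Fin n // a ∈ A} => ¬(f a).isLeft)).card
          = ((univ.filter (fun a : {a : Fin n // a ∈ A} => ¬(f a).isLeft)).image f).card :=
            (Finset.card_image_of_injective _ hfinj).symm
        _ ≤ ((univ : Finset (Fin d)).image Sum.inr).card := Finset.card_le_card hsub2
        _ ≤ d := by rw [Finset.card_image_of_injective _ Sum.inr_injective]; simp
    have hAcount : s1.card + (univ.filter (fun a : {a : Fin n // a ∈ A} => ¬(f a).isLeft)).card
        = A.card := by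
      rw [hs1, Finset.card_filter_add_card_filter_not, Finset.card_univ,
        Fintype.card_coe]
    have hM'le := hMmax M' hM'match
    omega
  -- the stable set
  refine ⟨X ∪ (Bs \ N X), ⟨?_, ?_⟩, ?_⟩
  · intro v hv
    rcases Finset.mem_union.1 hv with h | h
    · have := hXA h; rw [hA, Finset.mem_filter] at this; exact this.2.2
    · have := (Finset.mem_sdiff.1 h).1; rw [hBs, Finset.mem_filter] at this; exact this.2.2
  · intro u hu v hv hadj
    have colX : ∀ w ∈ X, col w = true := by
      intro w hw; have := hXA hw; rw [hA, Finset.mem_filter] at this; exact this.2.1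
    have colB : ∀ w ∈ Bs, col w = false := by
      intro w hw; rw [hBs, Finset.mem_filter] at hw; exact hw.2.1
    rcases Finset.mem_union.1 hu with hu | hu <;> rcases Finset.mem_union.1 hv with hv | hv
    · exact hbip u v hadj (by rw [colX u hu, colX v hv])
    · exact (Finset.mem_sdiff.1 hv).2 (by
        rw [hNdef, Finset.mem_filter]
        exact ⟨(Finset.mem_sdiff.1 hv).1, u, hu, hadj⟩)
    · exact (Finset.mem_sdiff.1 hu).2 (by
        rw [hNdef, Finset.mem_filter]
        exact ⟨(Finset.mem_sdiff.1 hu).1, v, hv, hadj.symm⟩)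
    · exact hbip u v hadj (by
        rw [colB u (Finset.mem_sdiff.1 hu).1, colB v (Finset.mem_sdiff.1 hv).1])
  · have hNsub : N X ⊆ Bs := by rw [hNdef]; exact Finset.filter_subset _ _
    have hXBdisj : Disjoint X (Bs \ N X) := by
      rw [Finset.disjoint_left]
      intro x hx hx'
      have h1 := hXA hx
      have h2 := (Finset.mem_sdiff.1 hx').1
      rw [hA, Finset.mem_filter] at h1
      rw [hBs, Finset.mem_filter] at h2
      rw [h1.2.1] at h2
      exact Bool.noConfusion h2.2.1
    have hcardS : (X ∪ (Bs \ N X)).card = X.card + (Bs.card - (N X).card) := by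
      rw [Finset.card_union_of_disjoint hXBdisj, Finset.card_sdiff_of_subset hNsub]
    have hNB : (N X).card ≤ Bs.card := Finset.card_le_card hNsub
    omega

lemma greedy_card_ge {n : ℕ} (G : SimpleGraph (Fin n))
    (c : Fin n → ℤ) (hcpos : ∀ v, 0 < c v) (hcmono : Monotone c)
    (B : ℤ)
    (R : Finset (Fin n)) (hRbudget : ∑ v ∈ R, c v ≤ B)
    (M : Finset (Fin n × Fin n)) (hM : IsMatchingAvoiding G R M)
    (ℓ : ℕ)
    (hℓmax : ∀ ℓ' : ℕ, ℓ' ≤ n →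
      (∑ v ∈ cheapest n ℓ' \ matchEnds M, c v ≤ B) → ℓ' ≤ ℓ) :
    R.card ≤ (cheapest n ℓ \ matchEnds M).card := by
  classical
  by_contra hcon
  push_neg at hcon
  set VM := matchEnds M with hVM
  set k := (cheapest n ℓ \ VM).card with hk
  have hkR : k + 1 ≤ R.card := hcon
  have hRW : ∀ r ∈ R, r ∉ VM := by
    intro r hr hrVM
    rw [hVM, matchEnds, Finset.mem_union] at hrVM
    rcases hrVM with h | h <;> rw [Finset.mem_image] at h <;> obtain ⟨p, hp, rfl⟩ := h
    · exact (hM.1 p hp).2.1 hr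
    · exact (hM.1 p hp).2.2 hr
  have hex : ∃ m, k + 1 ≤ (cheapest n m \ VM).card := by
    refine ⟨n, ?_⟩
    have hcn : cheapest n n = univ := by
      ext v; simp [cheapest, v.isLt]
    rw [hcn]
    calc k + 1 ≤ R.card := hkR
      _ ≤ (univ \ VM).card := Finset.card_le_card (by
        intro r hr; rw [Finset.mem_sdiff]; exact ⟨Finset.mem_univ r, hRW r hr⟩)
  set m := Nat.find hex with hm
  have hPm : k + 1 ≤ (cheapest n m \ VM).card := Nat.find_spec hex
  have hmn : m ≤ n := by
    rw [hm]; exact Nat.find_le (by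
      have hcn : cheapest n n = univ := by ext v; simp [cheapest, v.isLt]
      rw [hcn]
      calc k + 1 ≤ R.card := hkR
        _ ≤ (univ \ VM).card := Finset.card_le_card (by
          intro r hr; rw [Finset.mem_sdiff]; exact ⟨Finset.mem_univ r, hRW r hr⟩))
  have hm0 : m ≠ 0 := by
    intro h
    rw [h] at hPm
    simp [cheapest] at hPm
  have hmono : ∀ a b : ℕ, a ≤ b → (cheapest n a \ VM).card ≤ (cheapest n b \ VM).card := by
    intro a b hab
    apply Finset.card_le_card
    intro x hx
    rw [Finset.mem_sdiff] at hx ⊢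
    refine ⟨?_, hx.2⟩
    have := hx.1
    simp only [cheapest, Finset.mem_filter, Finset.mem_univ, true_and] at this ⊢
    omega
  have hℓm : ℓ < m := by
    by_contra hle
    push_neg at hle
    have := hmono m ℓ hle
    omega
  have hprev : (cheapest n (m - 1) \ VM).card < k + 1 := by
    have := Nat.find_min hex (m := m - 1) (by omega)
    omega
  have hstep : (cheapest n m \ VM).card ≤ (cheapest n (m - 1) \ VM).card + 1 := by
    have hmlt : m - 1 < n := by omega
    have hsub : cheapest n m \ VM ⊆ insert ⟨m - 1, hmlt⟩ (cheapest n (m - 1) \ VM) := by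
      intro x hx
      rw [Finset.mem_sdiff] at hx
      have hxm : (x : ℕ) < m := by
        have := hx.1; simpa [cheapest] using this
      rw [Finset.mem_insert]
      by_cases hc : (x : ℕ) < m - 1
      · exact Or.inr (Finset.mem_sdiff.2 ⟨by simpa [cheapest] using hc, hx.2⟩)
      · exact Or.inl (Fin.ext (show (x : ℕ) = m - 1 by omega))
    calc (cheapest n m \ VM).card ≤ _ := Finset.card_le_card hsub
      _ ≤ (cheapest n (m - 1) \ VM).card + 1 := Finset.card_insert_le _ _
  have hScard : (cheapest n m \ VM).card = k + 1 := by omega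
  set S := cheapest n m \ VM with hS
  obtain ⟨T, hTR, hTcard⟩ := Finset.exists_subset_card_eq (s := R) hkR
  have hcomp : ∀ x ∈ S \ T, ∀ y ∈ T \ S, x ≤ y := by
    intro x hx y hy
    have hxS := (Finset.mem_sdiff.1 hx).1
    have hyT := (Finset.mem_sdiff.1 hy).1
    have hyS := (Finset.mem_sdiff.1 hy).2
    have hxm : (x : ℕ) < m := by
      have := (Finset.mem_sdiff.1 hxS).1
      simpa [cheapest] using this
    have hyVM : y ∉ VM := hRW y (hTR hyT)
    have hym : ¬ (y : ℕ) < m := by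
      intro hlt
      exact hyS (Finset.mem_sdiff.2 ⟨by simpa [cheapest] using hlt, hyVM⟩)
    exact le_of_lt (by omega : (x : ℕ) < (y : ℕ))
  have hcards : (S \ T).card = (T \ S).card := by
    have h1 : S.card = T.card := by omega
    have h2 := Finset.card_sdiff_add_card_inter S T
    have h3 := Finset.card_sdiff_add_card_inter T S
    rw [Finset.inter_comm T S] at h3
    omega
  have hsum : ∑ v ∈ S, c v ≤ ∑ v ∈ T, c v := by
    set e := Finset.equivOfCardEq hcards with he
    set e' : Fin n → Fin n := fun x => if hx : x ∈ S \ T then (e ⟨x, hx⟩ : Fin n) else x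
      with he'
    have h1 : ∑ v ∈ S \ T, c v ≤ ∑ v ∈ S \ T, c (e' v) := by
      apply Finset.sum_le_sum
      intro i hi
      apply hcmono
      have hei : e' i = (e ⟨i, hi⟩ : Fin n) := by rw [he']; simp [hi]
      rw [hei]
      exact hcomp i hi _ (e ⟨i, hi⟩).2
    have h2 : ∑ v ∈ S \ T, c (e' v) = ∑ v ∈ T \ S, c v := by
      apply Finset.sum_bij (i := fun a _ => e' a)
      · intro a ha
        have hea : e' a = (e ⟨a, ha⟩ : Fin n) := by rw [he']; simp [ha]
        rw [hea]; exact (e ⟨a, ha⟩).2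
      · intro a ha b hb hab
        have ha' : e' a = (e ⟨a, ha⟩ : Fin n) := by rw [he']; simp [ha]
        have hb' : e' b = (e ⟨b, hb⟩ : Fin n) := by rw [he']; simp [hb]
        rw [ha', hb'] at hab
        exact congrArg Subtype.val (e.injective (Subtype.val_injective hab))
      · intro b hb
        refine ⟨(e.symm ⟨b, hb⟩ : Fin n), (e.symm ⟨b, hb⟩).2, ?_⟩
        have hes : e' (e.symm ⟨b, hb⟩ : Fin n) = (e (e.symm ⟨b, hb⟩) : Fin n) := by
          rw [he']; simp [(e.symm ⟨b, hb⟩).2]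
        rw [hes]
        simp
      · intro a ha; rfl
    have h4 := Finset.sum_inter_add_sum_sdiff S T c
    have h5 := Finset.sum_inter_add_sum_sdiff T S c
    have h3 : ∑ v ∈ S ∩ T, c v = ∑ v ∈ T ∩ S, c v := by rw [Finset.inter_comm]
    linarith
  have hsumT : ∑ v ∈ T, c v ≤ ∑ v ∈ R, c v := by
    apply Finset.sum_le_sum_of_subset_of_nonneg hTR
    intro i _ _
    exact le_of_lt (hcpos i)
  have hSB : ∑ v ∈ S, c v ≤ B := le_trans hsum (le_trans hsumT hRbudget)
  have := hℓmax m hmn hSB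
  omega

/-- From an optimal interdiction set `R` with maximum matching `M*` in
`G[V \ R]`, the set `R* = V_ℓ \ V(M*)`, with `ℓ` the largest index keeping the
cost within budget, is also an optimal interdiction set. -/
theorem optimal_interdiction_from_matching {n : ℕ} (G : SimpleGraph (Fin n))
    (col : Fin n → Bool) (hbip : ∀ u v : Fin n, G.Adj u v → col u ≠ col v)
    (c : Fin n → ℤ) (hcpos : ∀ v, 0 < c v) (hcmono : Monotone c)
    (B : ℤ) (hB : 0 < B)
    (alpha : Finset (Fin n) → ℕ)
    (halpha : ∀ R : Finset (Fin n), IsGreatest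
      {k : ℕ | ∃ S : Finset (Fin n), IsStableAvoiding G R S ∧ S.card = k}
      (alpha R))
    (R : Finset (Fin n)) (hRbudget : ∑ v ∈ R, c v ≤ B)
    (hRopt : ∀ R' : Finset (Fin n), ∑ v ∈ R', c v ≤ B → alpha R ≤ alpha R')
    (M : Finset (Fin n × Fin n)) (hM : IsMatchingAvoiding G R M)
    (hMmax : ∀ M' : Finset (Fin n × Fin n), IsMatchingAvoiding G R M' →
      M'.card ≤ M.card)
    (ℓ : ℕ) (hℓn : ℓ ≤ n)
    (hℓB : ∑ v ∈ cheapest n ℓ \ matchEnds M, c v ≤ B)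
    (hℓmax : ∀ ℓ' : ℕ, ℓ' ≤ n →
      (∑ v ∈ cheapest n ℓ' \ matchEnds M, c v ≤ B) → ℓ' ≤ ℓ) :
    (∑ v ∈ cheapest n ℓ \ matchEnds M, c v ≤ B) ∧
      ∀ R' : Finset (Fin n), ∑ v ∈ R', c v ≤ B →
        alpha (cheapest n ℓ \ matchEnds M) ≤ alpha R' := by
  classical
  refine ⟨hℓB, fun R' hR' => ?_⟩
  refine le_trans ?_ (hRopt R' hR')
  set Rs := cheapest n ℓ \ matchEnds M with hRs
  have hMRs : IsMatchingAvoiding G Rs M := by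
    refine ⟨fun p hp => ⟨(hM.1 p hp).1, ?_, ?_⟩, hM.2⟩
    · intro h
      exact (Finset.mem_sdiff.1 h).2 (Finset.mem_union_left _
        (Finset.mem_image_of_mem Prod.fst hp))
    · intro h
      exact (Finset.mem_sdiff.1 h).2 (Finset.mem_union_right _
        (Finset.mem_image_of_mem Prod.snd hp))
  obtain ⟨S1, hS1, hS1card⟩ := (halpha Rs).1
  have h1 : alpha Rs + M.card + Rs.card ≤ n := by
    rw [← hS1card]; exact stable_matching_bound G Rs M hMRs S1 hS1
  obtain ⟨S2, hS2, hS2b⟩ := konig_bound G col hbip R M hM hMmax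
  have h2 : S2.card ≤ alpha R := (halpha R).2 ⟨S2, hS2, rfl⟩
  have h3 := greedy_card_ge G c hcpos hcmono B R hRbudget M hM ℓ hℓmax
  rw [← hRs] at h3
  omega
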